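/- Let a = (a_{i,j}) be a Lusztig datum associated to ℤ (nonnegative integers indexed by pairs i < j in ℤ, with a_{i,j} = 0 whenever j - i ≥ N_a). Let I = [n+1, n+m] and k = (k_{n+1} < ⋯ < k_{n+u}) ∈ M_I^× with u ≥ N_a. If k_j = j for each n+1 ≤ j ≤ n+N_a, then M_k(a^I) = M_{k'}(a^{I'}) for all d > 0, where I' = [n-d+1, n+m], k' = [n-d+1, n] ∪ k, a^J denotes the restriction of a to Δ_J^+, and M_k(a^I) is defined by formula (2.4.1): M_k(a^I) = -∑_{j=n+1}^{n+u} ∑_{i=n+1}^{k_j - 1} a_{i, k_j} + min over all k-tableaux C = (c_{p,q}) of ∑_{n+1 ≤ p < q ≤ n+u} a_{c_{p,q}, c_{p,q} + (q-p)}. -/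

import Mathlib

/-- Restriction `a^J` of a Lusztig datum to the interval `J̃ = [lo, hi]`:
entries outside `Δ_J^+` are set to `0`. -/
def aRes (lo hi : ℤ) (a : ℤ → ℤ → ℕ) : ℤ → ℤ → ℕ :=
  fun i j => if lo ≤ i ∧ i < j ∧ j ≤ hi then a i j else 0

/-- `C` is a `κ`-tableau of size `u` (indices 0-indexed, `κ` listing
`k_{n+1} < ⋯ < k_{n+u}`): upper-triangular with diagonal `κ`, weakly
increasing along rows and strictly increasing down columns. -/
def IsTab (u : ℕ) (κ : ℕ → ℤ) (C : ℕ → ℕ → ℤ) : Prop :=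
  (∀ p < u, C p p = κ p) ∧
  (∀ p q : ℕ, p ≤ q → q + 1 < u → C p q ≤ C p (q + 1)) ∧
  (∀ p q : ℕ, p + 1 ≤ q → q < u → C p q < C (p + 1) q)

/-- The tableau sum `∑_{p<q} a_{c_{p,q}, c_{p,q}+(q-p)}`. -/
def TabSum (a : ℤ → ℤ → ℕ) (u : ℕ) (C : ℕ → ℕ → ℤ) : ℤ :=
  ∑ p ∈ Finset.range u, ∑ q ∈ Finset.range u,
    if p < q then (a (C p q) (C p q + (q : ℤ) - (p : ℤ)) : ℤ) else 0

/-- Formula (2.4.1):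
`M_k(a) = -∑_{j} ∑_{i=n+1}^{k_j - 1} a_{i,k_j} + min { tableau sums }`,
for the interval with left endpoint `n+1` and `k` enumerated by `κ` (size `u`). -/
noncomputable def Mval (a : ℤ → ℤ → ℕ) (n : ℤ) (u : ℕ) (κ : ℕ → ℤ) : ℤ :=
  -(∑ j ∈ Finset.range u, ∑ i ∈ Finset.Ico (n + 1) (κ j), (a i (κ j) : ℤ))
    + sInf {S : ℤ | ∃ C : ℕ → ℕ → ℤ, IsTab u κ C ∧ S = TabSum a u C}

/-- Lemma 6.1.1(1): for a Lusztig datum `a` on `ℤ` with bound `N`, an interval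
`I = [n+1, n+m]` and `k = (k_{n+1} < ⋯ < k_{n+u}) ∈ M_I^×` with `u ≥ N`, if
`k_j = j` for `n+1 ≤ j ≤ n+N`, then `M_k(a^I) = M_{k'}(a^{I'})` for all
`d > 0`, where `I' = [n-d+1, n+m]` and `k' = [n-d+1, n] ∪ k`. -/
lemma tab_lb {v : ℕ} {μ : ℕ → ℤ} {C : ℕ → ℕ → ℤ} (h : IsTab v μ C) :
    ∀ k p : ℕ, p + k < v → μ p ≤ C p (p + k) := by
  intro k
  induction k with
  | zero => intro p hp; exact (h.1 p hp).ge
  | succ k ih =>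
    intro p hp
    have h1 := ih p (by omega)
    have h2 := h.2.1 p (p + k) (by omega) (by omega)
    calc μ p ≤ C p (p + k) := h1
      _ ≤ C p (p + k + 1) := h2
      _ = C p (p + (k + 1)) := by rw [Nat.add_assoc]

lemma tab_ub {v : ℕ} {μ : ℕ → ℤ} {C : ℕ → ℕ → ℤ} (h : IsTab v μ C) :
    ∀ k p : ℕ, p + k < v → C p (p + k) + (k : ℤ) ≤ μ (p + k) := by
  intro k
  induction k with
  | zero => intro p hp; simp [h.1 p hp]
  | succ k ih =>
    intro p hp
    have h1 := ih (p + 1) (by omega)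
    have h2 := h.2.2 p (p + (k + 1)) (by omega) (by omega)
    have he : p + 1 + k = p + (k + 1) := by omega
    rw [he] at h1
    push_cast at h1 ⊢
    linarith

lemma tab_forced {v M : ℕ} {c : ℤ} {μ : ℕ → ℤ} {C : ℕ → ℕ → ℤ} (h : IsTab v μ C)
    (hμ : ∀ t < M, μ t = c + t) (hMv : M ≤ v) :
    ∀ p q : ℕ, p ≤ q → q < M → C p q = c + p := by
  intro p q hpq hq
  obtain ⟨k, rfl⟩ : ∃ k, q = p + k := ⟨q - p, by omega⟩
  have h1 := tab_lb h k p (by omega)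
  have h2 := tab_ub h k p (by omega)
  rw [hμ p (by omega)] at h1
  rw [hμ (p + k) (by omega)] at h2
  push_cast at h1 h2
  linarith

lemma sum_Ico_int_split (b e1 e2 : ℤ) (h1 : b ≤ e1) (h2 : e1 ≤ e2) (f : ℤ → ℤ) :
    ∑ i ∈ Finset.Ico b e2, f i = (∑ i ∈ Finset.Ico b e1, f i) + ∑ i ∈ Finset.Ico e1 e2, f i := by
  rw [← Finset.sum_union (Finset.Ico_disjoint_Ico_consecutive b e1 e2),
    Finset.Ico_union_Ico_eq_Ico h1 h2]

lemma sum_Ico_int (c : ℤ) (t : ℕ) (f : ℤ → ℤ) :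
    ∑ i ∈ Finset.Ico c (c + (t : ℤ)), f i = ∑ p ∈ Finset.range t, f (c + (p : ℤ)) := by
  induction t with
  | zero => simp
  | succ t ih =>
    rw [Finset.sum_range_succ, ← ih,
      show c + ((t + 1 : ℕ) : ℤ) = (c + t) + 1 by push_cast; ring,
      sum_Ico_int_split c (c + t) (c + t + 1) (by omega) (by omega) f,
      show Finset.Ico (c + (t : ℤ)) (c + t + 1) = {c + (t : ℤ)} by
        ext x; simp [Finset.mem_Ico]; omega,
      Finset.sum_singleton]

lemma sum_range_ite (j d : ℕ) (hj : j ≤ d) (f : ℕ → ℤ) :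
    ∑ p ∈ Finset.range d, (if p < j then f p else 0) = ∑ p ∈ Finset.range j, f p := by
  rw [Finset.sum_ite, Finset.sum_const_zero, add_zero]
  congr 1
  ext p
  simp only [Finset.mem_filter, Finset.mem_range]
  omega

lemma csInf_add_const (c0 : ℤ) (S : Set ℤ) (hne : S.Nonempty) (hbd : BddBelow S) :
    sInf ((fun s => c0 + s) '' S) = c0 + sInf S := by
  obtain ⟨b, hb⟩ := hbd
  have hbd' : BddBelow ((fun s => c0 + s) '' S) := by
    refine ⟨c0 + b, ?_⟩
    rintro x ⟨s, hs, rfl⟩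
    exact add_le_add_right (hb hs) c0
  apply le_antisymm
  · exact csInf_le hbd' ⟨_, Int.csInf_mem hne ⟨b, hb⟩, rfl⟩
  · apply le_csInf (hne.image _)
    rintro x ⟨s, hs, rfl⟩
    exact add_le_add_right (csInf_le ⟨b, hb⟩ hs) c0

def extTab (d : ℕ) (c : ℤ) (C : ℕ → ℕ → ℤ) : ℕ → ℕ → ℤ := fun p q =>
  if p < d then (if q < d then c + p else C 0 (q - d) - ((d : ℤ) - p)) else C (p - d) (q - d)

lemma extTab_res (d : ℕ) (c : ℤ) (C : ℕ → ℕ → ℤ) :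
    (fun p q => extTab d c C (d + p) (d + q)) = C := by
  funext p q
  simp [extTab, Nat.add_sub_cancel_left]

lemma extTab_isTab {u : ℕ} (d : ℕ) {c : ℤ} {κ : ℕ → ℤ} {C : ℕ → ℕ → ℤ}
    (hu : 0 < u) (hC : IsTab u κ C) (hκ0 : κ 0 = c + d) :
    IsTab (u + d) (fun t => if t < d then c + t else κ (t - d)) (extTab d c C) := by
  have hC00 : C 0 0 = c + d := by rw [hC.1 0 hu, hκ0]
  refine ⟨?_, ?_, ?_⟩
  · intro p hp
    by_cases h1 : p < d
    · simp [extTab, h1]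
    · simp only [extTab, if_neg h1]
      exact hC.1 (p - d) (by omega)
  · intro p q hpq hq1
    by_cases h1 : p < d
    · by_cases h2 : q + 1 < d
      · simp [extTab, h1, h2, show q < d by omega]
    
      · by_cases h3 : q < d
        · have hq1d : q + 1 - d = 0 := by omega
          simp only [extTab, if_pos h1, if_pos h3, if_neg h2, hq1d, hC00]
          push_cast
          linarith
        · simp only [extTab, if_pos h1, if_neg h3, if_neg h2,
            show q + 1 - d = (q - d) + 1 by omega]
          have := hC.2.1 0 (q - d) (by omega) (by omega)
          linarith
    · have h3 : ¬ q < d := by omega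
      have h4 : ¬ q + 1 < d := by omega
      simp only [extTab, if_neg h1, if_neg h4, show q + 1 - d = (q - d) + 1 by omega]
      exact hC.2.1 (p - d) (q - d) (by omega) (by omega)
  · intro p q hpq hq
    by_cases h1 : p + 1 < d
    · have h0 : p < d := by omega
      by_cases h2 : q < d
      · simp only [extTab, if_pos h1, if_pos h0, if_pos h2]
        push_cast
        linarith
      · simp only [extTab, if_pos h1, if_pos h0, if_neg h2]
        push_cast
        linarith
    · by_cases h0 : p < d
      · -- p + 1 = d
        have h2 : ¬ q < d := by omega
        simp only [extTab, if_pos h0, if_neg h1, if_neg h2,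
          show p + 1 - d = 0 by omega]
        have : (d : ℤ) - p = 1 := by
          have : p + 1 = d := by omega
          push_cast [← this]; ring
        rw [this]
        linarith
      · have h2 : ¬ q < d := by omega
        simp only [extTab, if_neg h0, if_neg h1, if_neg h2,
          show p + 1 - d = (p - d) + 1 by omega]
        exact hC.2.2 (p - d) (q - d) (by omega) (by omega)

theorem stmt9 (a : ℤ → ℤ → ℕ) (N : ℕ) (hN : 0 < N)
    (ha : ∀ i j : ℤ, (N : ℤ) ≤ j - i → a i j = 0)
    (n : ℤ) (m u : ℕ) (hu1 : 1 ≤ u) (hum : u ≤ m) (huN : N ≤ u)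
    (κ : ℕ → ℤ)
    (hmono : ∀ s t : ℕ, s < t → t < u → κ s < κ t)
    (hrange : ∀ t < u, n + 1 ≤ κ t ∧ κ t ≤ n + (m : ℤ) + 1)
    (hinit : ∀ t < N, κ t = n + 1 + (t : ℤ))
    (d : ℕ) (hd : 0 < d) :
    Mval (aRes (n + 1) (n + (m : ℤ) + 1) a) n u κ =
      Mval (aRes (n - (d : ℤ) + 1) (n + (m : ℤ) + 1) a) (n - (d : ℤ)) (u + d)
        (fun t => if t < d then n - (d : ℤ) + 1 + (t : ℤ) else κ (t - d)) := by
  have hκlb : ∀ t, t < u → n + 1 + (t : ℤ) ≤ κ t := by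
    intro t
    induction t with
    | zero => intro h; exact (hinit 0 hN).ge
    | succ t ih =>
      intro h
      have h1 := ih (by omega)
      have h2 := hmono t (t + 1) (by omega) h
      push_cast at h1 ⊢
      linarith
  set A : ℤ → ℤ → ℕ := aRes (n + 1) (n + (m : ℤ) + 1) a with hA
  set A' : ℤ → ℤ → ℕ := aRes (n - (d : ℤ) + 1) (n + (m : ℤ) + 1) a with hA'
  simp only [Mval]
  set c : ℤ := n - (d : ℤ) + 1 with hc
  set κ' : ℕ → ℤ := fun t => if t < d then c + (t : ℤ) else κ (t - d) with hκ'
  -- basic facts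
  have hAA' : ∀ i j : ℤ, n + 1 ≤ i → A' i j = A i j := by
    intro i j hi
    rw [hA, hA']
    simp only [aRes]
    split_ifs with h1 h2 <;> first | rfl | omega
  have hA'0 : ∀ i j : ℤ, (N : ℤ) ≤ j - i → A' i j = 0 := by
    intro i j hij
    rw [hA']
    simp only [aRes]
    split_ifs with h1
    · exact ha i j hij
    · rfl
  have hκ'init : ∀ t, t < d + N → κ' t = c + (t : ℤ) := by
    intro t ht
    rw [hκ']
    by_cases h1 : t < d
    · simp only [if_pos h1]
    · simp only [if_neg h1]
      rw [hinit (t - d) (by omega)]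
      have he : ((t - d : ℕ) : ℤ) = (t : ℤ) - (d : ℤ) := by omega
      rw [he]
      omega
  have hκ'd : ∀ p : ℕ, κ' (d + p) = κ p := by
    intro p
    simp only [hκ', if_neg (show ¬ d + p < d by omega), Nat.add_sub_cancel_left]
  -- restriction of a κ'-tableau
  have hres : ∀ C', IsTab (u + d) κ' C' → IsTab u κ (fun p q => C' (d + p) (d + q)) := by
    intro C' h
    refine ⟨fun p hp => ?_, fun p q hpq hq => ?_, fun p q hpq hq => ?_⟩
    · have := h.1 (d + p) (by omega)
      rwa [hκ'd p] at this
    · exact h.2.1 (d + p) (d + q) (by omega) (by omega)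
    · exact h.2.2 (d + p) (d + q) (by omega) (by omega)
  -- term equality on genuine κ-tableaux
  have hterm : ∀ C, IsTab u κ C → ∀ p q : ℕ, p < q → q < u →
      A' (C p q) (C p q + (q : ℤ) - (p : ℤ)) = A (C p q) (C p q + (q : ℤ) - (p : ℤ)) := by
    intro C hC p q hpq hq
    obtain ⟨k, rfl⟩ : ∃ k, q = p + k := ⟨q - p, by omega⟩
    have h1 := tab_lb hC k p hq
    have h3 := (hrange p (by omega)).1
    exact hAA' _ _ (by linarith)
  set Extra : ℤ := ∑ p ∈ Finset.range d, ∑ q ∈ Finset.range (d + u),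
      (if p < q then (A' (c + (p : ℤ)) (c + (q : ℤ)) : ℤ) else 0) with hEx
  -- decomposition of tableau sums
  have hsplit : ∀ C', IsTab (u + d) κ' C' →
      TabSum A' (u + d) C' = Extra + TabSum A u (fun p q => C' (d + p) (d + q)) := by
    intro C' hC'
    have hCres := hres C' hC'
    have hforced : ∀ p q : ℕ, p ≤ q → q < d + N → C' p q = c + (p : ℤ) :=
      tab_forced hC' hκ'init (by omega)
    simp only [TabSum]
    rw [show u + d = d + u by omega, Finset.sum_range_add]
    congr 1
    · -- part with p < d equals Extra
      rw [hEx]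
      refine Finset.sum_congr rfl fun p hp => ?_
      rw [Finset.mem_range] at hp
      refine Finset.sum_congr rfl fun q hq => ?_
      rw [Finset.mem_range] at hq
      by_cases h1 : p < q
      · rw [if_pos h1, if_pos h1]
        by_cases h2 : q < d + N
        · rw [hforced p q (by omega) h2, show c + (p : ℤ) + (q : ℤ) - (p : ℤ) = c + (q : ℤ) by ring]
        · have hgap : (N : ℤ) ≤ (q : ℤ) - (p : ℤ) := by omega
          rw [hA'0 _ _ (by linarith), hA'0 _ _ (by linarith)]
      · rw [if_neg h1, if_neg h1]
    · -- part with p ≥ d equals TabSum A u Cres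
      refine Finset.sum_congr rfl fun p hp => ?_
      rw [Finset.mem_range] at hp
      rw [Finset.sum_range_add]
      have hz : ∀ f : ℕ → ℤ, (∑ q ∈ Finset.range d, if d + p < q then f q else 0) = 0 :=
        fun f => Finset.sum_eq_zero fun q hq => if_neg (by rw [Finset.mem_range] at hq; omega)
      rw [hz, zero_add]
      refine Finset.sum_congr rfl fun q hq => ?_
      rw [Finset.mem_range] at hq
      by_cases h1 : p < q
      · rw [if_pos (show d + p < d + q by omega), if_pos h1]
        have harg : C' (d + p) (d + q) + ((d + q : ℕ) : ℤ) - ((d + p : ℕ) : ℤ)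
            = C' (d + p) (d + q) + (q : ℤ) - (p : ℤ) := by push_cast; ring
        rw [harg]
        have := hterm _ hCres p q h1 hq
        rw [this]
      · rw [if_neg (show ¬ d + p < d + q by omega), if_neg h1]
  -- nonemptiness and boundedness
  have htabnn : ∀ (b : ℤ → ℤ → ℕ) (v : ℕ) (C : ℕ → ℕ → ℤ), 0 ≤ TabSum b v C := by
    intro b v C
    refine Finset.sum_nonneg fun p _ => Finset.sum_nonneg fun q _ => ?_
    split
    · positivity
    · exact le_refl 0
  have hSL_ne : ({S : ℤ | ∃ C, IsTab u κ C ∧ S = TabSum A u C}).Nonempty := by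
    refine ⟨TabSum A u (fun p _ => κ p), ⟨fun p _ => κ p, ⟨fun p _ => rfl, fun p q hpq hq => le_refl _,
      fun p q hpq hq => hmono p (p + 1) (by omega) (by omega)⟩, rfl⟩⟩
  have hSL_bd : BddBelow {S : ℤ | ∃ C, IsTab u κ C ∧ S = TabSum A u C} := by
    refine ⟨0, fun s hs => ?_⟩
    obtain ⟨C, _, rfl⟩ := hs
    exact htabnn A u C
  -- the two sInf-sets
  have hSeq : {S : ℤ | ∃ C, IsTab (u + d) κ' C ∧ S = TabSum A' (u + d) C}
      = (fun s => Extra + s) '' {S : ℤ | ∃ C, IsTab u κ C ∧ S = TabSum A u C} := by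
    ext s
    simp only [Set.mem_setOf_eq, Set.mem_image]
    constructor
    · rintro ⟨C', hC', rfl⟩
      exact ⟨TabSum A u (fun p q => C' (d + p) (d + q)), ⟨_, hres C' hC', rfl⟩,
        (hsplit C' hC').symm⟩
    · rintro ⟨s, ⟨C, hC, rfl⟩, rfl⟩
      have hC00 : κ 0 = c + (d : ℤ) := by rw [hinit 0 hN]; push_cast; omega
      have hext := extTab_isTab d (show 0 < u by omega) hC hC00
      rw [← hκ'] at hext
      refine ⟨extTab d c C, hext, ?_⟩
      rw [hsplit _ hext, extTab_res]
  -- linear terms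
  have hLR : (∑ j ∈ Finset.range (u + d), ∑ i ∈ Finset.Ico c (κ' j), (A' i (κ' j) : ℤ))
      = Extra + ∑ j ∈ Finset.range u, ∑ i ∈ Finset.Ico (n + 1) (κ j), (A i (κ j) : ℤ) := by
    have hEsplit : Extra = (∑ p ∈ Finset.range d, ∑ q ∈ Finset.range d,
          if p < q then (A' (c + (p : ℤ)) (c + (q : ℤ)) : ℤ) else 0)
        + ∑ p ∈ Finset.range d, ∑ q ∈ Finset.range u,
            (A' (c + (p : ℤ)) (c + ((d + q : ℕ) : ℤ)) : ℤ) := by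
      rw [hEx, ← Finset.sum_add_distrib]
      refine Finset.sum_congr rfl fun p hp => ?_
      rw [Finset.mem_range] at hp
      rw [Finset.sum_range_add]
      congr 1
      refine Finset.sum_congr rfl fun q hq => ?_
      rw [if_pos (show p < d + q by omega)]
    have hB1 : (∑ j ∈ Finset.range d, ∑ i ∈ Finset.Ico c (κ' j), (A' i (κ' j) : ℤ))
        = ∑ p ∈ Finset.range d, ∑ q ∈ Finset.range d,
            if p < q then (A' (c + (p : ℤ)) (c + (q : ℤ)) : ℤ) else 0 := by
      calc (∑ j ∈ Finset.range d, ∑ i ∈ Finset.Ico c (κ' j), (A' i (κ' j) : ℤ))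
          = ∑ j ∈ Finset.range d, ∑ p ∈ Finset.range d,
              (if p < j then (A' (c + (p : ℤ)) (c + (j : ℤ)) : ℤ) else 0) := by
            refine Finset.sum_congr rfl fun j hj => ?_
            rw [Finset.mem_range] at hj
            rw [hκ'init j (by omega), sum_Ico_int c j, sum_range_ite j d (by omega)]
        _ = _ := Finset.sum_comm
    have hstep : ∀ j, j < u → (∑ i ∈ Finset.Ico c (κ' (d + j)), (A' i (κ' (d + j)) : ℤ))
        = (∑ p ∈ Finset.range d, (A' (c + (p : ℤ)) (c + ((d + j : ℕ) : ℤ)) : ℤ))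
          + ∑ i ∈ Finset.Ico (n + 1) (κ j), (A i (κ j) : ℤ) := by
      intro j hj
      rw [hκ'd j, sum_Ico_int_split c (n + 1) (κ j) (by omega) (hrange j hj).1]
      congr 1
      · rw [show (n : ℤ) + 1 = c + ((d : ℕ) : ℤ) by omega, sum_Ico_int c d]
        refine Finset.sum_congr rfl fun p hp => ?_
        rw [Finset.mem_range] at hp
        by_cases hjN : j < N
        · rw [hinit j hjN, show n + 1 + (j : ℤ) = c + ((d + j : ℕ) : ℤ) by push_cast; omega]
        · have hjN' : (N : ℤ) ≤ (j : ℤ) := by omega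
          have hdj : ((d + j : ℕ) : ℤ) = (d : ℤ) + (j : ℤ) := by push_cast; ring
          have hp' : (p : ℤ) < (d : ℤ) := by omega
          have hκj := hκlb j hj
          rw [hA'0 _ _ (by linarith), hA'0 _ _ (by rw [hdj]; linarith)]
      · refine Finset.sum_congr rfl fun i hi => ?_
        rw [hAA' i (κ j) (Finset.mem_Ico.mp hi).1]
    calc (∑ j ∈ Finset.range (u + d), ∑ i ∈ Finset.Ico c (κ' j), (A' i (κ' j) : ℤ))
        = (∑ j ∈ Finset.range d, ∑ i ∈ Finset.Ico c (κ' j), (A' i (κ' j) : ℤ))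
          + ∑ j ∈ Finset.range u, ∑ i ∈ Finset.Ico c (κ' (d + j)), (A' i (κ' (d + j)) : ℤ) := by
          rw [show u + d = d + u by omega, Finset.sum_range_add]
      _ = (∑ p ∈ Finset.range d, ∑ q ∈ Finset.range d,
            if p < q then (A' (c + (p : ℤ)) (c + (q : ℤ)) : ℤ) else 0)
          + ((∑ j ∈ Finset.range u, ∑ p ∈ Finset.range d,
              (A' (c + (p : ℤ)) (c + ((d + j : ℕ) : ℤ)) : ℤ))
            + ∑ j ∈ Finset.range u, ∑ i ∈ Finset.Ico (n + 1) (κ j), (A i (κ j) : ℤ)) := by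
          rw [hB1]
          congr 1
          rw [← Finset.sum_add_distrib]
          exact Finset.sum_congr rfl fun j hj => hstep j (Finset.mem_range.mp hj)
      _ = Extra + ∑ j ∈ Finset.range u, ∑ i ∈ Finset.Ico (n + 1) (κ j), (A i (κ j) : ℤ) := by
          rw [hEsplit]
          have : (∑ j ∈ Finset.range u, ∑ p ∈ Finset.range d,
              (A' (c + (p : ℤ)) (c + ((d + j : ℕ) : ℤ)) : ℤ))
              = ∑ p ∈ Finset.range d, ∑ q ∈ Finset.range u,
                  (A' (c + (p : ℤ)) (c + ((d + q : ℕ) : ℤ)) : ℤ) := Finset.sum_comm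
          rw [this]
          ring
  rw [hSeq, csInf_add_const Extra _ hSL_ne hSL_bd, hLR]
  ring
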